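/- For all integers r ≥ 1 and s ≥ 1, the following inequality of real numbers holds: Σ_{i=1}^{r} (e·r·√(rs)/i)^i · (2e)^{r−i} · ((r−i)·√(s/r))^{r−i+3} ≤ (3e)^r · (rs)^{(r+3)/2}. -/

import Mathlib

open Real Finset

/-- `n^k ≤ C(n,k) * k^k` for `k ≤ n`. -/
lemma pow_le_choose_mul_pow : ∀ (k n : ℕ), k ≤ n → n ^ k ≤ n.choose k * k ^ k
  | 0, n, _ => by simp
  | (k+1), n, h => by
    obtain ⟨m, rfl⟩ : ∃ m, n = m + 1 := ⟨n - 1, by omega⟩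
    have hkm : k ≤ m := by omega
    have ih := pow_le_choose_mul_pow k m hkm
    have hmul : (m + 1) * k ≤ m * (k + 1) := by nlinarith
    have hkk : 0 < k ^ k := by
      cases k with
      | zero => simp
      | succ k => positivity
    have h2 : (m + 1) ^ k * k ^ k ≤ (m.choose k * (k + 1) ^ k) * k ^ k := by
      calc (m + 1) ^ k * k ^ k = ((m + 1) * k) ^ k := (mul_pow _ _ _).symm
        _ ≤ (m * (k + 1)) ^ k := Nat.pow_le_pow_left hmul k
        _ = m ^ k * (k + 1) ^ k := mul_pow _ _ _
        _ ≤ (m.choose k * k ^ k) * (k + 1) ^ k := Nat.mul_le_mul_right _ ih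
        _ = (m.choose k * (k + 1) ^ k) * k ^ k := by ring
    have h3 : (m + 1) ^ k ≤ m.choose k * (k + 1) ^ k :=
      Nat.le_of_mul_le_mul_right h2 hkk
    calc (m + 1) ^ (k + 1) = (m + 1) * (m + 1) ^ k := by ring
      _ ≤ (m + 1) * (m.choose k * (k + 1) ^ k) := Nat.mul_le_mul_left _ h3
      _ = ((m + 1) * m.choose k) * (k + 1) ^ k := by ring
      _ = ((m + 1).choose (k + 1) * (k + 1)) * (k + 1) ^ k := by
          rw [Nat.add_one_mul_choose_eq]
      _ = (m + 1).choose (k + 1) * (k + 1) ^ (k + 1) := by ring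

/-- key natural-number estimate: `(i+j)^i * j^(j+3) ≤ C(i+j, j) * (i^i * (i+j)^(j+3))`. -/
lemma nat_key (i j : ℕ) : (i + j) ^ i * j ^ (j + 3) ≤
    (i + j).choose j * (i ^ i * (i + j) ^ (j + 3)) := by
  have h1 : j ^ (j + 3) ≤ (i + j) ^ (j + 3) := Nat.pow_le_pow_left (by omega) _
  have h2 : (i + j) ^ i ≤ (i + j).choose i * i ^ i :=
    pow_le_choose_mul_pow i (i + j) (by omega)
  have h3 : (i + j).choose i = (i + j).choose j := by
    rw [← Nat.choose_symm (by omega : i ≤ i + j), Nat.add_sub_cancel_left]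
  calc (i + j) ^ i * j ^ (j + 3) ≤ ((i + j).choose i * i ^ i) * (i + j) ^ (j + 3) :=
        Nat.mul_le_mul h2 h1
    _ = (i + j).choose j * (i ^ i * (i + j) ^ (j + 3)) := by rw [h3]; ring

/-- sum of `C(r, r-i) * 2^(r-i)` over `i ∈ [1, r]` is at most `3^r`. -/
lemma nat_sum_key (r : ℕ) : (∑ i ∈ Finset.Icc 1 r, r.choose (r - i) * 2 ^ (r - i)) ≤ 3 ^ r := by
  have h1 : (∑ i ∈ Finset.Icc 1 r, r.choose (r - i) * 2 ^ (r - i)) =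
      ∑ i ∈ Finset.range r, r.choose (r - 1 - i) * 2 ^ (r - 1 - i) := by
    rw [show Finset.Icc 1 r = Finset.Ico 1 (r + 1) by rfl, Finset.sum_Ico_eq_sum_range]
    apply Finset.sum_congr (by norm_num)
    intro i _
    congr 2 <;> omega
  have h2 : (∑ i ∈ Finset.range r, r.choose (r - 1 - i) * 2 ^ (r - 1 - i)) =
      ∑ j ∈ Finset.range r, r.choose j * 2 ^ j :=
    Finset.sum_range_reflect (fun j => r.choose j * 2 ^ j) r
  have h3 : (∑ j ∈ Finset.range (r + 1), 2 ^ j * r.choose j) = 3 ^ r := by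
    have h := add_pow (2:ℕ) 1 r
    simp [Nat.cast_id] at h
    rw [← h]
  calc (∑ i ∈ Finset.Icc 1 r, r.choose (r - i) * 2 ^ (r - i))
      = ∑ j ∈ Finset.range r, r.choose j * 2 ^ j := by rw [h1, h2]
    _ ≤ ∑ j ∈ Finset.range (r + 1), r.choose j * 2 ^ j :=
        Finset.sum_le_sum_of_subset (Finset.range_subset_range.mpr (by omega))
    _ = ∑ j ∈ Finset.range (r + 1), 2 ^ j * r.choose j := by
        apply Finset.sum_congr rfl; intro j _; ring
    _ = 3 ^ r := h3

theorem algorithm_IV_sum_bound (r s : ℕ) (hr : 1 ≤ r) (hs : 1 ≤ s) :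
    ∑ i ∈ Finset.Icc 1 r,
        (Real.exp 1 * r * Real.sqrt (r * s) / i) ^ i * (2 * Real.exp 1) ^ (r - i) *
          (((r : ℝ) - i) * Real.sqrt ((s : ℝ) / r)) ^ (r - i + 3)
      ≤ (3 * Real.exp 1) ^ r * ((r : ℝ) * s) ^ (((r : ℝ) + 3) / 2) := by
  obtain ⟨E, hE0, hE⟩ : ∃ E : ℝ, 0 < E ∧ Real.exp 1 = E := ⟨_, Real.exp_pos 1, rfl⟩
  rw [hE]
  have hR0 : (0:ℝ) < (r:ℝ) := by exact_mod_cast hr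
  have hS0 : (0:ℝ) ≤ (s:ℝ) := by positivity
  set w := Real.sqrt ((r:ℝ) * (s:ℝ)) with hw
  have hw0 : (0:ℝ) ≤ w := Real.sqrt_nonneg _
  have hsq : Real.sqrt ((s:ℝ) / (r:ℝ)) = w / (r:ℝ) := by
    rw [hw, Real.sqrt_div hS0, Real.sqrt_mul hR0.le]
    rw [div_eq_div_iff (Real.sqrt_pos.mpr hR0).ne' hR0.ne']
    have hrr : Real.sqrt (r:ℝ) * Real.sqrt (r:ℝ) = (r:ℝ) := Real.mul_self_sqrt hR0.le
    linear_combination (-Real.sqrt (s:ℝ)) * hrr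
  have hrhs : ((r:ℝ) * s) ^ (((r:ℝ) + 3) / 2) = w ^ (r + 3) := by
    rw [hw, Real.sqrt_eq_rpow, ← Real.rpow_natCast (((r:ℝ) * s) ^ ((1:ℝ)/2)) (r + 3),
      ← Real.rpow_mul (by positivity)]
    congr 1
    push_cast; ring
  have hterm : ∀ i ∈ Finset.Icc 1 r,
      (E * r * Real.sqrt ((r:ℝ) * (s:ℝ)) / i) ^ i * (2 * E) ^ (r - i) *
          (((r : ℝ) - i) * Real.sqrt ((s : ℝ) / r)) ^ (r - i + 3)
        ≤ ((r.choose (r - i) * 2 ^ (r - i) : ℕ) : ℝ) * E ^ r * w ^ (r + 3) := by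
    intro i hi
    rw [Finset.mem_Icc] at hi
    obtain ⟨j, rfl⟩ : ∃ j, r = i + j := ⟨r - i, by omega⟩
    simp only [Nat.add_sub_cancel_left]
    have hi1 : 0 < i := hi.1
    have hI0 : (0:ℝ) < (i:ℝ) := by exact_mod_cast hi1
    have hIJ0 : (0:ℝ) < ((i + j:ℕ):ℝ) := by exact_mod_cast Nat.lt_of_lt_of_le hi1 (by omega)
    have hJ : ((i + j:ℕ):ℝ) - (i:ℝ) = (j:ℝ) := by push_cast; ring
    rw [hsq, hJ, ← hw]
    obtain ⟨N, hN0, hN⟩ : ∃ N : ℝ, 0 < N ∧ ((i + j:ℕ):ℝ) = N := ⟨_, hIJ0, rfl⟩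
    rw [hN]
    have hratio : (N ^ i * (j:ℝ) ^ (j + 3)) /
        ((i:ℝ) ^ i * N ^ (j + 3)) ≤ (((i + j).choose j : ℕ) : ℝ) := by
      rw [div_le_iff₀ (mul_pos (pow_pos hI0 i) (pow_pos hN0 (j + 3))), ← hN]
      exact_mod_cast nat_key i j
    calc (E * N * w / (i:ℝ)) ^ i * (2 * E) ^ j *
            ((j:ℝ) * (w / N)) ^ (j + 3)
        = E ^ (i + j) * 2 ^ j * w ^ (i + j + 3) *
            ((N ^ i * (j:ℝ) ^ (j + 3)) /
              ((i:ℝ) ^ i * N ^ (j + 3))) := by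
          simp only [div_pow, mul_pow]
          field_simp
          ring
      _ ≤ E ^ (i + j) * 2 ^ j * w ^ (i + j + 3) * (((i + j).choose j : ℕ) : ℝ) :=
          mul_le_mul_of_nonneg_left hratio (mul_nonneg (mul_nonneg (pow_nonneg hE0.le _) (by positivity)) (pow_nonneg hw0 _))
      _ = (((i + j).choose j * 2 ^ j : ℕ) : ℝ) * E ^ (i + j) * w ^ (i + j + 3) := by
          push_cast; ring
  calc ∑ i ∈ Finset.Icc 1 r,
        (E * r * Real.sqrt ((r:ℝ) * (s:ℝ)) / i) ^ i * (2 * E) ^ (r - i) *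
          (((r : ℝ) - i) * Real.sqrt ((s : ℝ) / r)) ^ (r - i + 3)
      ≤ ∑ i ∈ Finset.Icc 1 r,
          ((r.choose (r - i) * 2 ^ (r - i) : ℕ) : ℝ) * E ^ r * w ^ (r + 3) :=
        Finset.sum_le_sum hterm
    _ = ((∑ i ∈ Finset.Icc 1 r, r.choose (r - i) * 2 ^ (r - i) : ℕ) : ℝ) *
          E ^ r * w ^ (r + 3) := by
        rw [← Finset.sum_mul, ← Finset.sum_mul, Nat.cast_sum]
    _ ≤ ((3 ^ r : ℕ) : ℝ) * E ^ r * w ^ (r + 3) := by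
        have h := nat_sum_key r
        have h' : ((∑ i ∈ Finset.Icc 1 r, r.choose (r - i) * 2 ^ (r - i) : ℕ) : ℝ) ≤
            ((3 ^ r : ℕ) : ℝ) := by exact_mod_cast h
        exact mul_le_mul_of_nonneg_right (mul_le_mul_of_nonneg_right h' (pow_nonneg hE0.le r))
          (pow_nonneg hw0 _)
    _ = (3 * E) ^ r * ((r : ℝ) * s) ^ (((r : ℝ) + 3) / 2) := by
        rw [hrhs]; push_cast; ring
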